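/- For every integer ℓ ≥ 1 and every real t > 0, det( I_{j−k}(2t) + I_{j+k+1}(2t) )_{0≤j,k≤ℓ−1} = 2^{ℓ(ℓ−1)} / (π^{ℓ} ℓ!) · ∫_{[−1,1]^{ℓ}} Π_{1≤k<m≤ℓ} (x_k − x_m)² · Π_{j=1}^{ℓ} √((1 + x_j)/(1 − x_j)) · e^{2t x_j} dx_1⋯dx_ℓ. -/

import Mathlib

open MeasureTheory Filter Real intervalIntegral

/-- The modified Bessel-type coefficient `I_j(2t) = (1/2π)∫_{-π}^{π} e^{2t cos θ} cos(jθ) dθ`. -/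
noncomputable def besselI (j : ℤ) (t : ℝ) : ℝ :=
  (1 / (2 * Real.pi)) * ∫ θ in (-Real.pi)..Real.pi, Real.exp (2 * t * Real.cos θ) * Real.cos (j * θ)

section Aux
open Polynomial Polynomial.Chebyshev Real Set intervalIntegral MeasureTheory Matrix

lemma U_coeff_zero_of_lt : ∀ n : ℕ, ∀ a : ℕ, n < a → (U ℝ (n:ℤ)).coeff a = 0
  | 0, a, h => by
      rw [Nat.cast_zero, U_zero]
      rw [Polynomial.coeff_one, if_neg (by omega)]
  | 1, a, h => by
      rw [Nat.cast_one, U_one, Polynomial.coeff_ofNat_mul]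
      obtain ⟨b, rfl⟩ : ∃ b, a = b + 1 := ⟨a - 1, by omega⟩
      rw [Polynomial.coeff_X, if_neg (by omega)]
      ring
  | (n+2), a, h => by
      have h2 : ((n:ℤ) + 2) = ((n+2 : ℕ) : ℤ) := by push_cast; ring
      have h3 := U_add_two ℝ (n : ℤ)
      rw [h2] at h3
      rw [h3]
      obtain ⟨b, rfl⟩ : ∃ b, a = b + 1 := ⟨a - 1, by omega⟩
      rw [Polynomial.coeff_sub, mul_assoc, Polynomial.coeff_ofNat_mul, Polynomial.coeff_X_mul]
      have h1 : ((n:ℤ) + 1) = ((n+1 : ℕ) : ℤ) := by push_cast; ring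
      rw [h1, U_coeff_zero_of_lt (n+1) b (by omega), U_coeff_zero_of_lt n (b+1) (by omega)]
      ring

lemma U_coeff_self : ∀ n : ℕ, (U ℝ (n:ℤ)).coeff n = 2 ^ n
  | 0 => by rw [Nat.cast_zero, U_zero]; simp
  | 1 => by
      rw [Nat.cast_one, U_one, Polynomial.coeff_ofNat_mul, Polynomial.coeff_X, if_pos rfl]
      norm_num
  | (n+2) => by
      have h2 : ((n:ℤ) + 2) = ((n+2 : ℕ) : ℤ) := by push_cast; ring
      have h3 := U_add_two ℝ (n : ℤ)
      rw [h2] at h3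
      rw [h3, Polynomial.coeff_sub, mul_assoc, Polynomial.coeff_ofNat_mul,
        show n + 2 = (n+1) + 1 from rfl, Polynomial.coeff_X_mul]
      have h1 : ((n:ℤ) + 1) = ((n+1 : ℕ) : ℤ) := by push_cast; ring
      rw [h1, U_coeff_self (n+1), U_coeff_zero_of_lt n (n+2) (by omega)]
      ring

noncomputable def Vp (n : ℕ) : ℝ[X] := U ℝ (n:ℤ) - U ℝ ((n:ℤ) - 1)


lemma Vp_coeff_zero_of_lt (n a : ℕ) (h : n < a) : (Vp n).coeff a = 0 := by
  rw [Vp, Polynomial.coeff_sub, U_coeff_zero_of_lt n a h]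
  rcases n with _ | m
  · norm_num [Polynomial.Chebyshev.U_neg_one]
  · have h1 : ((m+1 : ℕ):ℤ) - 1 = ((m:ℕ):ℤ) := by push_cast; ring
    rw [h1, U_coeff_zero_of_lt m a (by omega)]
    ring

lemma Vp_coeff_self (n : ℕ) : (Vp n).coeff n = 2 ^ n := by
  rw [Vp, Polynomial.coeff_sub, U_coeff_self n]
  rcases n with _ | m
  · norm_num [Polynomial.Chebyshev.U_neg_one]
  · have h1 : ((m+1 : ℕ):ℤ) - 1 = ((m:ℕ):ℤ) := by push_cast; ring
    rw [h1, U_coeff_zero_of_lt m (m+1) (by omega)]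
    ring

/-- key pointwise trig identity -/
lemma trig_key (j k : ℕ) (θ : ℝ) (hs : Real.sin θ ≠ 0) :
    Real.cos ((((j:ℤ) - k : ℤ) : ℝ) * θ) + Real.cos ((((j:ℤ) + k + 1 : ℤ) : ℝ) * θ)
      = (1 + Real.cos θ) * ((Vp j).eval (Real.cos θ)) * ((Vp k).eval (Real.cos θ)) := by
  have hU : ∀ n : ℕ, (Vp n).eval (Real.cos θ) * Real.sin θ
      = Real.sin ((n:ℝ) * θ) * Real.cos θ + Real.cos ((n:ℝ) * θ) * Real.sin θ
        - Real.sin ((n:ℝ) * θ) := by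
    intro n
    have h1 := U_real_cos θ (n : ℤ)
    have h2 := U_real_cos θ ((n : ℤ) - 1)
    rw [Vp, Polynomial.eval_sub, sub_mul, h1, h2]
    push_cast
    rw [show ((n:ℝ) + 1) * θ = (n:ℝ) * θ + θ by ring, show ((n:ℝ) - 1 + 1) * θ = (n:ℝ) * θ by ring,
      Real.sin_add]
  have hj := hU j
  have hk := hU k
  have hP := Real.sin_sq_add_cos_sq θ
  set P := (Vp j).eval (Real.cos θ)
  set Q := (Vp k).eval (Real.cos θ)
  have hs2 : Real.sin θ ^ 2 ≠ 0 := pow_ne_zero _ hs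
  have key : Real.sin θ ^ 2 * (Real.cos ((((j:ℤ) - k : ℤ) : ℝ) * θ)
        + Real.cos ((((j:ℤ) + k + 1 : ℤ) : ℝ) * θ))
      = Real.sin θ ^ 2 * ((1 + Real.cos θ) * P * Q) := by
    push_cast
    rw [show ((j:ℝ) - k) * θ = (j:ℝ)*θ - (k:ℝ)*θ by ring,
      show ((j:ℝ) + k + 1) * θ = ((j:ℝ)*θ + (k:ℝ)*θ) + θ by ring,
      Real.cos_sub, Real.cos_add ((j:ℝ)*θ + (k:ℝ)*θ) θ, Real.cos_add, Real.sin_add]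
    linear_combination (-Real.cos ((j:ℝ)*θ)*Real.sin ((k:ℝ)*θ)*Real.sin θ
        - Real.sin ((j:ℝ)*θ)*Real.cos ((k:ℝ)*θ)*Real.sin θ
        + Real.sin ((j:ℝ)*θ)*Real.sin ((k:ℝ)*θ)
        - Real.sin ((j:ℝ)*θ)*Real.sin ((k:ℝ)*θ)*Real.cos θ) * hP
      + (-(1 + Real.cos θ) * (Q * Real.sin θ)) * hj
      + (-(1 + Real.cos θ) * (Real.sin ((j:ℝ)*θ) * Real.cos θ
          + Real.cos ((j:ℝ)*θ) * Real.sin θ - Real.sin ((j:ℝ)*θ))) * hk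
  exact mul_left_cancel₀ hs2 key

noncomputable def wfun (t x : ℝ) : ℝ := Real.sqrt ((1+x)/(1-x)) * Real.exp (2*t*x)

noncomputable def mom (t : ℝ) (n : ℕ) : ℝ := ∫ x in Set.Icc (-1:ℝ) 1, x^n * wfun t x

noncomputable def trigmom (t : ℝ) (n : ℕ) : ℝ :=
  ∫ θ in (0:ℝ)..π, (1 + Real.cos θ) * Real.cos θ^n * Real.exp (2*t*Real.cos θ)

lemma wfun_meas (t : ℝ) (n : ℕ) : Measurable (fun x => x^n * wfun t x) := by
  unfold wfun
  exact (measurable_id.pow_const n).mul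
    ((((measurable_const.add measurable_id).div (measurable_const.sub measurable_id)).sqrt).mul
      ((measurable_const.mul measurable_id).exp))

lemma wfun_nonneg (t x : ℝ) : 0 ≤ wfun t x := by
  unfold wfun; positivity

lemma wfun_integrable (t : ℝ) (n : ℕ) :
    IntegrableOn (fun x => x^n * wfun t x) (Set.Icc (-1:ℝ) 1) := by
  have hg : IntegrableOn (fun x : ℝ => Real.sqrt 2 * Real.exp (2*|t|) * (1-x) ^ (-(1/2):ℝ))
      (Set.Icc (-1:ℝ) 1) := by
    have h1 : IntervalIntegrable (fun x : ℝ => x ^ (-(1/2):ℝ)) volume 0 2 :=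
      intervalIntegrable_rpow' (by norm_num)
    have h2 := h1.comp_sub_left 1
    norm_num at h2
    rw [intervalIntegrable_iff'] at h2
    have h3 : Set.uIcc (1:ℝ) (-1) = Set.Icc (-1:ℝ) 1 := Set.uIcc_of_ge (by norm_num)
    rw [h3] at h2
    exact h2.const_mul _
  refine MeasureTheory.Integrable.mono hg ((wfun_meas t n).aestronglyMeasurable.restrict) ?_
  filter_upwards [ae_restrict_mem measurableSet_Icc] with x hx
  obtain ⟨hx1, hx2⟩ := hx
  have habs : |x| ≤ 1 := abs_le.mpr ⟨hx1, hx2⟩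
  have h1x0 : (0:ℝ) ≤ 1 - x := by linarith
  have hB : (0:ℝ) ≤ Real.sqrt 2 * Real.exp (2*|t|) * (1-x) ^ (-(1/2):ℝ) :=
    mul_nonneg (mul_nonneg (Real.sqrt_nonneg _) (Real.exp_nonneg _)) (Real.rpow_nonneg h1x0 _)
  rw [Real.norm_eq_abs, Real.norm_eq_abs, abs_of_nonneg hB, abs_mul, abs_pow,
    abs_of_nonneg (wfun_nonneg t x)]
  have hexp : Real.exp (2*t*x) ≤ Real.exp (2*|t|) := by
    apply Real.exp_le_exp.mpr
    have : t * x ≤ |t| := le_trans (le_abs_self _) (by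
      rw [abs_mul]; nlinarith [abs_nonneg t])
    linarith
  rcases eq_or_lt_of_le hx2 with rfl | hlt
  · have hw1 : wfun t 1 = 0 := by unfold wfun; norm_num
    rw [hw1, mul_zero]; exact hB
  · have h1x : (0:ℝ) < 1 - x := by linarith
    have hsq : Real.sqrt ((1+x)/(1-x)) ≤ Real.sqrt 2 * (1-x) ^ (-(1/2):ℝ) := by
      have e1 : Real.sqrt ((1+x)/(1-x)) = Real.sqrt (1+x) / Real.sqrt (1-x) :=
        Real.sqrt_div (by linarith) _
      have e2 : ((1:ℝ)-x) ^ (-(1/2):ℝ) = (Real.sqrt (1-x))⁻¹ := by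
        rw [Real.rpow_neg h1x.le, Real.sqrt_eq_rpow]
      rw [e1, e2, div_eq_mul_inv]
      exact mul_le_mul_of_nonneg_right (Real.sqrt_le_sqrt (by linarith)) (by positivity)
    calc |x|^n * wfun t x ≤ 1 * wfun t x := by
          apply mul_le_mul_of_nonneg_right (pow_le_one₀ (abs_nonneg x) habs) (wfun_nonneg t x)
      _ = Real.sqrt ((1+x)/(1-x)) * Real.exp (2*t*x) := by rw [one_mul, wfun]
      _ ≤ (Real.sqrt 2 * (1-x) ^ (-(1/2):ℝ)) * Real.exp (2*|t|) := by
          apply mul_le_mul hsq hexp (Real.exp_nonneg _) (by positivity)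
      _ = Real.sqrt 2 * Real.exp (2*|t|) * (1-x) ^ (-(1/2):ℝ) := by ring

lemma sin_mul_wfun (t : ℝ) {θ : ℝ} (h1 : 0 < θ) (h2 : θ ≤ π) :
    Real.sin θ * wfun t (Real.cos θ) = (1 + Real.cos θ) * Real.exp (2*t*Real.cos θ) := by
  have hc1 : (0:ℝ) < 1 - Real.cos θ := by
    have := Real.cos_lt_cos_of_nonneg_of_le_pi le_rfl h2 h1
    rw [Real.cos_zero] at this; linarith
  have hc2 : (0:ℝ) ≤ 1 + Real.cos θ := by nlinarith [Real.neg_one_le_cos θ]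
  have hsin : Real.sin θ = Real.sqrt (1 - Real.cos θ) * Real.sqrt (1 + Real.cos θ) := by
    rw [← Real.sqrt_mul hc1.le]
    rw [show (1 - Real.cos θ) * (1 + Real.cos θ) = 1 - Real.cos θ^2 by ring, ← Real.sin_sq θ,
      Real.sqrt_sq (Real.sin_nonneg_of_nonneg_of_le_pi h1.le h2)]
  unfold wfun
  rw [Real.sqrt_div hc2 _, hsin]
  have h3 : Real.sqrt (1 - Real.cos θ) ≠ 0 := by positivity
  have h4 : Real.sqrt (1 + Real.cos θ) * Real.sqrt (1 + Real.cos θ) = 1 + Real.cos θ :=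
    Real.mul_self_sqrt hc2
  field_simp
  linear_combination h4

lemma mom_eq_trigmom (t : ℝ) (n : ℕ) : mom t n = trigmom t n := by
  set g : ℝ → ℝ := fun x => x^n * wfun t x with hgdef
  have h0ae : ∀ᵐ θ : ℝ, θ ≠ (0:ℝ) := by
    rw [MeasureTheory.ae_iff]
    simp only [ne_eq, not_not]
    convert Real.volume_singleton (a := (0:ℝ)) using 2
    rfl
  have hkey : ∀ θ : ℝ, 0 < θ → θ ≤ π →
      Real.sin θ * g (Real.cos θ) = (1 + Real.cos θ) * Real.cos θ^n * Real.exp (2*t*Real.cos θ) := by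
    intro θ hθ1 hθ2
    simp only [hgdef]
    rw [show Real.sin θ * (Real.cos θ^n * wfun t (Real.cos θ))
        = Real.cos θ^n * (Real.sin θ * wfun t (Real.cos θ)) by ring,
      sin_mul_wfun t hθ1 hθ2]
    ring
  have hsub : (∫ θ in (0:ℝ)..π, (-Real.sin θ) • g (Real.cos θ)) = ∫ x in (1:ℝ)..(-1), g x := by
    have hmm : min (0:ℝ) π = 0 := min_eq_left Real.pi_pos.le
    have hMM : max (0:ℝ) π = π := max_eq_right Real.pi_pos.le
    have himg : Real.cos '' Set.Ioo 0 π ⊆ Set.Ioo (-1:ℝ) 1 := by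
      rintro - ⟨θ, ⟨hθ1, hθ2⟩, rfl⟩
      constructor
      · have := Real.cos_lt_cos_of_nonneg_of_le_pi hθ1.le le_rfl hθ2
        rw [Real.cos_pi] at this; linarith
      · have := Real.cos_lt_cos_of_nonneg_of_le_pi le_rfl hθ2.le hθ1
        rw [Real.cos_zero] at this; linarith
    have hcont : ContinuousOn g (Set.Ioo (-1:ℝ) 1) := by
      apply ContinuousOn.mul (continuousOn_pow n)
      apply ContinuousOn.mul
      · apply Real.continuous_sqrt.comp_continuousOn
        exact ContinuousOn.div (continuousOn_const.add continuousOn_id)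
          (continuousOn_const.sub continuousOn_id)
          (fun x hx => sub_ne_zero.mpr (ne_of_gt hx.2))
      · exact (Real.continuous_exp.comp (continuous_const.mul continuous_id)).continuousOn
    have h01 : Real.cos '' Set.uIcc 0 π ⊆ Set.Icc (-1:ℝ) 1 := by
      rintro - ⟨θ, -, rfl⟩
      exact ⟨Real.neg_one_le_cos θ, Real.cos_le_one θ⟩
    have := intervalIntegral.integral_comp_smul_deriv''' (f := Real.cos)
      (f' := fun θ => -Real.sin θ) (g := g) (a := 0) (b := π)
      Real.continuous_cos.continuousOn
      (fun x _ => (Real.hasDerivAt_cos x).hasDerivWithinAt)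
      ?_ ?_ ?_
    · rw [Real.cos_zero, Real.cos_pi] at this
      exact this
    · rw [hmm, hMM]
      exact hcont.mono himg
    · exact (wfun_integrable t n).mono_set h01
    · have hF : IntegrableOn
          (fun θ => -((1 + Real.cos θ) * Real.cos θ^n * Real.exp (2*t*Real.cos θ)))
          (Set.uIcc 0 π) := by
        apply Continuous.integrableOn_uIcc
        continuity
      apply hF.congr
      have huIcc : Set.uIcc (0:ℝ) π = Set.Icc 0 π := Set.uIcc_of_le Real.pi_pos.le
      filter_upwards [ae_restrict_of_ae h0ae, ae_restrict_mem measurableSet_uIcc]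
        with θ hθ0 hθmem
      rw [huIcc] at hθmem
      have hθ1 : 0 < θ := lt_of_le_of_ne hθmem.1 (Ne.symm hθ0)
      rw [smul_eq_mul, ← hkey θ hθ1 hθmem.2]
      simp only [hgdef, Function.comp_apply]
      ring
  have hleft : (∫ θ in (0:ℝ)..π, (-Real.sin θ) • g (Real.cos θ))
      = -∫ θ in (0:ℝ)..π, Real.sin θ * g (Real.cos θ) := by
    rw [← intervalIntegral.integral_neg]
    congr 1 with θ
    simp only [smul_eq_mul]
    ring
  have hmom : mom t n = ∫ x in (-1:ℝ)..1, g x := by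
    rw [mom, intervalIntegral.integral_of_le (by norm_num : (-1:ℝ) ≤ 1),
      ← MeasureTheory.integral_Icc_eq_integral_Ioc]
  have htrig : trigmom t n = ∫ θ in (0:ℝ)..π, Real.sin θ * g (Real.cos θ) := by
    rw [trigmom]
    apply intervalIntegral.integral_congr_ae
    apply Filter.Eventually.of_forall
    intro θ hθ
    rw [Set.uIoc_of_le Real.pi_pos.le] at hθ
    exact (hkey θ hθ.1 hθ.2).symm
  rw [hleft, show (∫ x in (1:ℝ)..(-1), g x) = -∫ x in (-1:ℝ)..1, g x from
    intervalIntegral.integral_symm _ _] at hsub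
  rw [hmom, htrig]
  exact (neg_inj.mp hsub).symm

-- Part 7 : multiple integral
lemma prod_integral (ℓ : ℕ) (t : ℝ) (n : Fin ℓ → ℕ) :
    (∫ x : Fin ℓ → ℝ in Set.univ.pi fun _ => Set.Icc (-1:ℝ) 1,
      ∏ i : Fin ℓ, (x i)^(n i) * wfun t (x i)) = ∏ i : Fin ℓ, mom t (n i) := by
  have hms : MeasurableSet (Set.univ.pi fun _ : Fin ℓ => Set.Icc (-1:ℝ) 1) :=
    MeasurableSet.univ_pi fun _ => measurableSet_Icc
  rw [← MeasureTheory.integral_indicator hms]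
  have hind : ∀ x : Fin ℓ → ℝ,
      (Set.univ.pi fun _ : Fin ℓ => Set.Icc (-1:ℝ) 1).indicator
        (fun x => ∏ i : Fin ℓ, (x i)^(n i) * wfun t (x i)) x
      = ∏ i : Fin ℓ, (Set.Icc (-1:ℝ) 1).indicator (fun y => y^(n i) * wfun t y) (x i) := by
    intro x
    by_cases hx : x ∈ Set.univ.pi fun _ : Fin ℓ => Set.Icc (-1:ℝ) 1
    · rw [Set.indicator_of_mem hx]
      exact Finset.prod_congr rfl fun i _ =>
        (Set.indicator_of_mem (show x i ∈ Set.Icc (-1:ℝ) 1 from hx i (Set.mem_univ i))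
          (fun y => y ^ n i * wfun t y)).symm
    · rw [Set.indicator_of_notMem hx]
      rw [Set.mem_pi] at hx
      push_neg at hx
      obtain ⟨i, -, hi⟩ := hx
      exact (Finset.prod_eq_zero (Finset.mem_univ i)
        (by rw [Set.indicator_of_notMem hi])).symm
  simp_rw [hind]
  rw [MeasureTheory.volume_pi, MeasureTheory.integral_fintype_prod_eq_prod (ι := Fin ℓ)
    (f := fun i y => (Set.Icc (-1:ℝ) 1).indicator (fun z => z^(n i) * wfun t z) y)]
  exact Finset.prod_congr rfl fun i _ => by
    rw [MeasureTheory.integral_indicator measurableSet_Icc]; rfl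

lemma term_integrable (ℓ : ℕ) (t : ℝ) (n : Fin ℓ → ℕ) :
    Integrable (fun x : Fin ℓ → ℝ =>
      ∏ i : Fin ℓ, (Set.Icc (-1:ℝ) 1).indicator (fun y => y^(n i) * wfun t y) (x i)) := by
  apply MeasureTheory.Integrable.fintype_prod_dep
    (f := fun i y => (Set.Icc (-1:ℝ) 1).indicator (fun z => z^(n i) * wfun t z) y)
  intro i
  rw [MeasureTheory.integrable_indicator_iff measurableSet_Icc]
  exact wfun_integrable t (n i)

lemma multint (ℓ : ℕ) (t : ℝ) :
    (∫ x : Fin ℓ → ℝ in Set.univ.pi fun _ => Set.Icc (-1:ℝ) 1,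
      (∏ k : Fin ℓ, ∏ m ∈ Finset.Ioi k, (x k - x m) ^ 2) * ∏ j : Fin ℓ, wfun t (x j))
    = (ℓ.factorial : ℝ) * Matrix.det (Matrix.of fun a b : Fin ℓ => mom t ((a:ℕ) + (b:ℕ))) := by
  classical
  -- pointwise rewrite of the integrand as a double sum over permutations
  have hpt : ∀ x : Fin ℓ → ℝ,
      (∏ k : Fin ℓ, ∏ m ∈ Finset.Ioi k, (x k - x m) ^ 2) * ∏ j : Fin ℓ, wfun t (x j)
      = ∑ σ : Equiv.Perm (Fin ℓ), ∑ τ : Equiv.Perm (Fin ℓ),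
          ((Equiv.Perm.sign σ : ℤ) * (Equiv.Perm.sign τ : ℤ) : ℝ) *
            ∏ i : Fin ℓ, (x i)^((σ i : ℕ) + (τ i : ℕ)) * wfun t (x i) := by
    intro x
    have h1 : (∏ k : Fin ℓ, ∏ m ∈ Finset.Ioi k, (x k - x m) ^ 2)
        = (Matrix.det (Matrix.vandermonde x))^2 := by
      rw [Matrix.det_vandermonde]
      rw [← Finset.prod_pow]
      apply Finset.prod_congr rfl
      intro k _
      rw [← Finset.prod_pow]
      exact Finset.prod_congr rfl fun m _ => by ring
    have h2 : Matrix.det (Matrix.vandermonde x)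
        = ∑ σ : Equiv.Perm (Fin ℓ), ((Equiv.Perm.sign σ : ℤ) : ℝ) * ∏ i, (x i)^(σ i : ℕ) := by
      rw [← Matrix.det_transpose, Matrix.det_apply']
      simp only [Matrix.transpose_apply, Matrix.vandermonde_apply]
    rw [h1, sq, h2, Finset.sum_mul_sum]
    rw [Finset.sum_mul]
    apply Finset.sum_congr rfl
    intro σ _
    rw [Finset.sum_mul]
    apply Finset.sum_congr rfl
    intro τ _
    have hprod : (∏ i : Fin ℓ, (x i)^(σ i : ℕ)) * ((∏ i : Fin ℓ, (x i)^(τ i : ℕ))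
          * (∏ j : Fin ℓ, wfun t (x j)))
        = ∏ i : Fin ℓ, (x i)^((σ i : ℕ) + (τ i : ℕ)) * wfun t (x i) := by
      rw [← Finset.prod_mul_distrib, ← Finset.prod_mul_distrib]
      exact Finset.prod_congr rfl fun i _ => by rw [pow_add]; ring
    calc (((Equiv.Perm.sign σ : ℤ) : ℝ) * ∏ i : Fin ℓ, (x i)^(σ i : ℕ))
          * (((Equiv.Perm.sign τ : ℤ) : ℝ) * ∏ i : Fin ℓ, (x i)^(τ i : ℕ))
          * ∏ j : Fin ℓ, wfun t (x j)
        = ((Equiv.Perm.sign σ : ℤ) * (Equiv.Perm.sign τ : ℤ) : ℝ)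
            * ((∏ i : Fin ℓ, (x i)^(σ i : ℕ)) * ((∏ i : Fin ℓ, (x i)^(τ i : ℕ))
              * (∏ j : Fin ℓ, wfun t (x j)))) := by push_cast; ring
      _ = _ := by rw [hprod]
  simp_rw [hpt]
  -- swap integral and sums
  have hms : MeasurableSet (Set.univ.pi fun _ : Fin ℓ => Set.Icc (-1:ℝ) 1) :=
    MeasurableSet.univ_pi fun _ => measurableSet_Icc
  have hswap : (∫ x : Fin ℓ → ℝ in Set.univ.pi fun _ => Set.Icc (-1:ℝ) 1,
      ∑ σ : Equiv.Perm (Fin ℓ), ∑ τ : Equiv.Perm (Fin ℓ),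
          ((Equiv.Perm.sign σ : ℤ) * (Equiv.Perm.sign τ : ℤ) : ℝ) *
            ∏ i : Fin ℓ, (x i)^((σ i : ℕ) + (τ i : ℕ)) * wfun t (x i))
      = ∑ σ : Equiv.Perm (Fin ℓ), ∑ τ : Equiv.Perm (Fin ℓ),
          ((Equiv.Perm.sign σ : ℤ) * (Equiv.Perm.sign τ : ℤ) : ℝ) *
            ∏ i : Fin ℓ, mom t ((σ i : ℕ) + (τ i : ℕ)) := by
    rw [← MeasureTheory.integral_indicator hms]
    have hindsum : ∀ x : Fin ℓ → ℝ,
        (Set.univ.pi fun _ : Fin ℓ => Set.Icc (-1:ℝ) 1).indicator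
          (fun x => ∑ σ : Equiv.Perm (Fin ℓ), ∑ τ : Equiv.Perm (Fin ℓ),
            ((Equiv.Perm.sign σ : ℤ) * (Equiv.Perm.sign τ : ℤ) : ℝ) *
              ∏ i : Fin ℓ, (x i)^((σ i : ℕ) + (τ i : ℕ)) * wfun t (x i)) x
        = ∑ σ : Equiv.Perm (Fin ℓ), ∑ τ : Equiv.Perm (Fin ℓ),
            ((Equiv.Perm.sign σ : ℤ) * (Equiv.Perm.sign τ : ℤ) : ℝ) *
              ∏ i : Fin ℓ, (Set.Icc (-1:ℝ) 1).indicator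
                (fun y => y^((σ i : ℕ) + (τ i : ℕ)) * wfun t y) (x i) := by
      intro x
      by_cases hx : x ∈ Set.univ.pi fun _ : Fin ℓ => Set.Icc (-1:ℝ) 1
      · rw [Set.indicator_of_mem hx]
        refine Finset.sum_congr rfl fun σ _ => Finset.sum_congr rfl fun τ _ => ?_
        congr 1
        exact Finset.prod_congr rfl fun i _ =>
          (Set.indicator_of_mem (show x i ∈ Set.Icc (-1:ℝ) 1 from hx i (Set.mem_univ i))
            (fun y => y ^ ((σ i : ℕ) + (τ i : ℕ)) * wfun t y)).symm
      · rw [Set.indicator_of_notMem hx]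
        rw [Set.mem_pi] at hx
        push_neg at hx
        obtain ⟨i, -, hi⟩ := hx
        symm
        refine Finset.sum_eq_zero fun σ _ => Finset.sum_eq_zero fun τ _ => ?_
        rw [Finset.prod_eq_zero (Finset.mem_univ i)
          (by rw [Set.indicator_of_notMem hi]), mul_zero]
    simp_rw [hindsum]
    rw [MeasureTheory.integral_finset_sum]
    swap
    · intro σ _
      apply MeasureTheory.integrable_finset_sum
      intro τ _
      exact (term_integrable ℓ t fun i => (σ i : ℕ) + (τ i : ℕ)).const_mul _
    refine Finset.sum_congr rfl fun σ _ => ?_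
    rw [MeasureTheory.integral_finset_sum]
    swap
    · intro τ _
      exact (term_integrable ℓ t fun i => (σ i : ℕ) + (τ i : ℕ)).const_mul _
    refine Finset.sum_congr rfl fun τ _ => ?_
    rw [MeasureTheory.integral_const_mul]
    congr 1
    have := prod_integral ℓ t (fun i => (σ i : ℕ) + (τ i : ℕ))
    rw [← MeasureTheory.integral_indicator hms] at this
    rw [← this]
    congr 1
    ext x
    by_cases hx : x ∈ Set.univ.pi fun _ : Fin ℓ => Set.Icc (-1:ℝ) 1
    · rw [Set.indicator_of_mem hx]
      exact Finset.prod_congr rfl fun i _ =>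
        Set.indicator_of_mem (show x i ∈ Set.Icc (-1:ℝ) 1 from hx i (Set.mem_univ i))
          (fun y => y ^ ((σ i : ℕ) + (τ i : ℕ)) * wfun t y)
    · rw [Set.indicator_of_notMem hx]
      rw [Set.mem_pi] at hx
      push_neg at hx
      obtain ⟨i, -, hi⟩ := hx
      exact Finset.prod_eq_zero (Finset.mem_univ i) (by rw [Set.indicator_of_notMem hi])
  rw [hswap]
  -- algebraic symmetrization
  have hdet : Matrix.det (Matrix.of fun a b : Fin ℓ => mom t ((a:ℕ) + (b:ℕ)))
      = ∑ ρ : Equiv.Perm (Fin ℓ), ((Equiv.Perm.sign ρ : ℤ) : ℝ) *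
          ∏ i : Fin ℓ, mom t ((i:ℕ) + (ρ i : ℕ)) := by
    rw [Matrix.det_apply']
    refine Finset.sum_congr rfl fun ρ _ => ?_
    congr 1
    exact Finset.prod_congr rfl fun i _ => by
      rw [Matrix.of_apply, Nat.add_comm]
  have hinner : ∀ σ : Equiv.Perm (Fin ℓ),
      (∑ τ : Equiv.Perm (Fin ℓ),
          ((Equiv.Perm.sign σ : ℤ) * (Equiv.Perm.sign τ : ℤ) : ℝ) *
            ∏ i : Fin ℓ, mom t ((σ i : ℕ) + (τ i : ℕ)))
      = Matrix.det (Matrix.of fun a b : Fin ℓ => mom t ((a:ℕ) + (b:ℕ))) := by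
    intro σ
    rw [hdet]
    rw [← Equiv.sum_comp (Equiv.mulRight σ)
      (fun τ => ((Equiv.Perm.sign σ : ℤ) * (Equiv.Perm.sign τ : ℤ) : ℝ) *
        ∏ i : Fin ℓ, mom t ((σ i : ℕ) + (τ i : ℕ)))]
    refine Finset.sum_congr rfl fun ρ _ => ?_
    have hsign : ((Equiv.Perm.sign σ : ℤ) * (Equiv.Perm.sign (Equiv.mulRight σ ρ) : ℤ) : ℝ)
        = ((Equiv.Perm.sign ρ : ℤ) : ℝ) := by
      have : Equiv.mulRight σ ρ = ρ * σ := rfl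
      rw [this, Equiv.Perm.sign_mul]
      push_cast
      rcases Int.units_eq_one_or (Equiv.Perm.sign σ) with h | h <;> rw [h] <;> norm_num
    rw [hsign]
    congr 1
    have : ∀ i : Fin ℓ, (Equiv.mulRight σ ρ) (σ⁻¹ i)  = ρ i := by
      intro i
      simp [Equiv.Perm.mul_apply]
    calc (∏ i : Fin ℓ, mom t ((σ i : ℕ) + ((Equiv.mulRight σ ρ) i : ℕ)))
        = ∏ i : Fin ℓ, mom t ((σ (σ⁻¹ i) : ℕ) + ((Equiv.mulRight σ ρ) (σ⁻¹ i) : ℕ)) := by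
          rw [← Equiv.prod_comp σ⁻¹
            (fun i => mom t ((σ i : ℕ) + ((Equiv.mulRight σ ρ) i : ℕ)))]
      _ = ∏ i : Fin ℓ, mom t ((i:ℕ) + (ρ i : ℕ)) := by
          refine Finset.prod_congr rfl fun i _ => ?_
          rw [this i, ← Equiv.Perm.mul_apply, mul_inv_cancel, Equiv.Perm.one_apply]
  calc (∑ σ : Equiv.Perm (Fin ℓ), ∑ τ : Equiv.Perm (Fin ℓ),
          ((Equiv.Perm.sign σ : ℤ) * (Equiv.Perm.sign τ : ℤ) : ℝ) *
            ∏ i : Fin ℓ, mom t ((σ i : ℕ) + (τ i : ℕ)))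
      = ∑ σ : Equiv.Perm (Fin ℓ),
          Matrix.det (Matrix.of fun a b : Fin ℓ => mom t ((a:ℕ) + (b:ℕ))) :=
        Finset.sum_congr rfl fun σ _ => hinner σ
    _ = (ℓ.factorial : ℝ) * Matrix.det (Matrix.of fun a b : Fin ℓ => mom t ((a:ℕ) + (b:ℕ))) := by
        rw [Finset.sum_const, Finset.card_univ, Fintype.card_perm, Fintype.card_fin,
          nsmul_eq_mul]

noncomputable def Cmat (ℓ : ℕ) : Matrix (Fin ℓ) (Fin ℓ) ℝ :=
  Matrix.of fun j a => (Vp (j:ℕ)).coeff (a:ℕ)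
noncomputable def Hmat (ℓ : ℕ) (t : ℝ) : Matrix (Fin ℓ) (Fin ℓ) ℝ :=
  Matrix.of fun a b => (1/π) * trigmom t ((a:ℕ)+(b:ℕ))

lemma Vp_natDegree_lt (n ℓ : ℕ) (h : n < ℓ) : (Vp n).natDegree < ℓ :=
  lt_of_le_of_lt (Polynomial.natDegree_le_iff_coeff_eq_zero.mpr
    fun m hm => Vp_coeff_zero_of_lt n m hm) h

lemma Vp_eval_expand (ℓ n : ℕ) (h : n < ℓ) (y : ℝ) :
    (Vp n).eval y = ∑ a : Fin ℓ, (Vp n).coeff (a:ℕ) * y^(a:ℕ) := by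
  rw [Polynomial.eval_eq_sum_range' (Vp_natDegree_lt n ℓ h),
    ← Fin.sum_univ_eq_sum_range (fun a => (Vp n).coeff a * y^a) ℓ]

lemma sin_ne_zero_ae : ∀ᵐ θ : ℝ, Real.sin θ ≠ 0 := by
  have hsub : {θ : ℝ | Real.sin θ = 0} ⊆ Set.range (fun n : ℤ => (n:ℝ) * π) := by
    intro θ hθ
    obtain ⟨n, hn⟩ := Real.sin_eq_zero_iff.mp hθ
    exact ⟨n, hn⟩
  rw [MeasureTheory.ae_iff]
  simp only [ne_eq, not_not]
  exact measure_mono_null hsub ((Set.countable_range _).measure_zero _)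

lemma entry_eq (ℓ : ℕ) (t : ℝ) (j k : Fin ℓ) :
    besselI ((j:ℤ) - (k:ℤ)) t + besselI ((j:ℤ) + (k:ℤ) + 1) t
      = (Cmat ℓ * Hmat ℓ t * (Cmat ℓ)ᵀ) j k := by
  classical
  set G : ℝ → ℝ := fun θ => Real.exp (2*t*Real.cos θ) *
    ((1 + Real.cos θ) * ((Vp (j:ℕ)).eval (Real.cos θ)) * ((Vp (k:ℕ)).eval (Real.cos θ)))
    with hGdef
  have hGcont : Continuous G := by
    apply Continuous.mul
    · exact Real.continuous_exp.comp (continuous_const.mul Real.continuous_cos)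
    · apply Continuous.mul
      · exact ((continuous_const.add Real.continuous_cos).mul
          ((Vp (j:ℕ)).continuous_aeval.comp Real.continuous_cos))
      · exact (Vp (k:ℕ)).continuous_aeval.comp Real.continuous_cos
  -- step 1: sum of the two Bessel integrals
  have hint : ∀ c : ℤ, IntervalIntegrable
      (fun θ => Real.exp (2*t*Real.cos θ) * Real.cos ((c:ℝ) * θ)) volume (-π) π := by
    intro c
    apply Continuous.intervalIntegrable
    exact (Real.continuous_exp.comp (continuous_const.mul Real.continuous_cos)).mul
      (Real.continuous_cos.comp (continuous_const.mul continuous_id))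
  have h1 : besselI ((j:ℤ) - (k:ℤ)) t + besselI ((j:ℤ) + (k:ℤ) + 1) t
      = (1/(2*π)) * ∫ θ in (-π)..π,
          (Real.exp (2*t*Real.cos θ) * Real.cos ((((j:ℤ) - k : ℤ):ℝ) * θ)
            + Real.exp (2*t*Real.cos θ) * Real.cos ((((j:ℤ) + k + 1 : ℤ):ℝ) * θ)) := by
    rw [intervalIntegral.integral_add (hint _) (hint _), besselI, besselI, mul_add]
  -- step 2: a.e. rewrite to G
  have h2 : (∫ θ in (-π)..π,
        (Real.exp (2*t*Real.cos θ) * Real.cos ((((j:ℤ) - k : ℤ):ℝ) * θ)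
          + Real.exp (2*t*Real.cos θ) * Real.cos ((((j:ℤ) + k + 1 : ℤ):ℝ) * θ)))
      = ∫ θ in (-π)..π, G θ := by
    apply intervalIntegral.integral_congr_ae
    filter_upwards [sin_ne_zero_ae] with θ hθ _
    rw [hGdef]
    have := trig_key (j:ℕ) (k:ℕ) θ hθ
    push_cast at this ⊢
    rw [← mul_add, this]
  -- step 3: evenness
  have h3 : (∫ θ in (-π)..π, G θ) = 2 * ∫ θ in (0:ℝ)..π, G θ := by
    have hadj : (∫ θ in (-π)..(0:ℝ), G θ) + (∫ θ in (0:ℝ)..π, G θ) = ∫ θ in (-π)..π, G θ :=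
      intervalIntegral.integral_add_adjacent_intervals
        (hGcont.intervalIntegrable _ _) (hGcont.intervalIntegrable _ _)
    have hneg : (∫ θ in (-π)..(0:ℝ), G θ) = ∫ θ in (0:ℝ)..π, G θ := by
      have hc := intervalIntegral.integral_comp_neg (a := 0) (b := π) G
      have hGeven : ∀ θ, G (-θ) = G θ := by
        intro θ; rw [hGdef]; simp [Real.cos_neg]
      simp only [hGeven, neg_zero] at hc
      rw [← hc]
    linarith [hadj]
  -- step 4: pointwise expansion into double sum
  have h4 : ∀ θ : ℝ, G θ = ∑ a : Fin ℓ, ∑ b : Fin ℓ,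
      (Vp (j:ℕ)).coeff (a:ℕ) * (Vp (k:ℕ)).coeff (b:ℕ) *
        ((1 + Real.cos θ) * Real.cos θ^((a:ℕ)+(b:ℕ)) * Real.exp (2*t*Real.cos θ)) := by
    intro θ
    rw [hGdef]
    simp only
    rw [Vp_eval_expand ℓ (j:ℕ) j.isLt (Real.cos θ), Vp_eval_expand ℓ (k:ℕ) k.isLt (Real.cos θ)]
    simp only [Finset.mul_sum, Finset.sum_mul]
    rw [Finset.sum_comm]
    refine Finset.sum_congr rfl fun a _ => Finset.sum_congr rfl fun b _ => ?_
    rw [pow_add]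
    ring
  -- step 5: integrate the double sum
  have hterm_int : ∀ (a b : Fin ℓ), IntervalIntegrable
      (fun θ => (Vp (j:ℕ)).coeff (a:ℕ) * (Vp (k:ℕ)).coeff (b:ℕ) *
        ((1 + Real.cos θ) * Real.cos θ^((a:ℕ)+(b:ℕ)) * Real.exp (2*t*Real.cos θ)))
      volume 0 π := by
    intro a b
    apply Continuous.intervalIntegrable
    apply continuous_const.mul
    exact ((continuous_const.add Real.continuous_cos).mul
      (Real.continuous_cos.pow _)).mul
      (Real.continuous_exp.comp (continuous_const.mul Real.continuous_cos))
  have h5 : (∫ θ in (0:ℝ)..π, G θ) = ∑ a : Fin ℓ, ∑ b : Fin ℓ,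
      (Vp (j:ℕ)).coeff (a:ℕ) * (Vp (k:ℕ)).coeff (b:ℕ) * trigmom t ((a:ℕ)+(b:ℕ)) := by
    simp_rw [h4]
    rw [intervalIntegral.integral_finset_sum (fun a _ => ?_)]
    swap
    · apply Continuous.intervalIntegrable
      apply continuous_finset_sum
      intro b _
      apply continuous_const.mul
      exact ((continuous_const.add Real.continuous_cos).mul
        (Real.continuous_cos.pow _)).mul
        (Real.continuous_exp.comp (continuous_const.mul Real.continuous_cos))
    refine Finset.sum_congr rfl fun a _ => ?_
    rw [intervalIntegral.integral_finset_sum (fun b _ => hterm_int a b)]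
    refine Finset.sum_congr rfl fun b _ => ?_
    rw [intervalIntegral.integral_const_mul, trigmom]
  -- step 6: matrix entry
  have h6 : (Cmat ℓ * Hmat ℓ t * (Cmat ℓ)ᵀ) j k
      = ∑ a : Fin ℓ, ∑ b : Fin ℓ,
          (Vp (j:ℕ)).coeff (a:ℕ) * (Vp (k:ℕ)).coeff (b:ℕ) *
            ((1/π) * trigmom t ((a:ℕ)+(b:ℕ))) := by
    rw [Matrix.mul_apply]
    simp_rw [Matrix.mul_apply]
    rw [Finset.sum_comm]
    refine Finset.sum_congr rfl fun a _ => ?_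
    rw [Finset.sum_mul]
    refine Finset.sum_congr rfl fun b _ => ?_
    simp only [Cmat, Hmat, Matrix.of_apply, Matrix.transpose_apply]
    ring
  rw [h1, h2, h3, h5, h6, ← mul_assoc]
  have hc : (1:ℝ)/(2*π) * 2 = 1/π := by
    field_simp
  rw [hc, Finset.mul_sum]
  refine Finset.sum_congr rfl fun a _ => ?_
  rw [Finset.mul_sum]
  refine Finset.sum_congr rfl fun b _ => ?_
  ring

end Aux

section Main
open Polynomial Polynomial.Chebyshev Real Set intervalIntegral MeasureTheory Matrix

/-- Identity (5.18)-(5.19): the determinant `det(I_{j-k}(2t) + I_{j+k+1}(2t))`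
equals a Jacobi-type multiple integral over `[-1,1]^ℓ`. -/
theorem det_minus_plus_integral (ℓ : ℕ) (hℓ : 1 ≤ ℓ) (t : ℝ) (ht : 0 < t) :
    Matrix.det (Matrix.of fun j k : Fin ℓ =>
        besselI ((j : ℤ) - (k : ℤ)) t + besselI ((j : ℤ) + (k : ℤ) + 1) t)
      = 2 ^ (ℓ * (ℓ - 1)) / (Real.pi ^ ℓ * (ℓ.factorial : ℝ)) *
        ∫ x : Fin ℓ → ℝ in Set.univ.pi fun _ => Set.Icc (-1 : ℝ) 1,
          (∏ k : Fin ℓ, ∏ m ∈ Finset.Ioi k, (x k - x m) ^ 2) *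
            ∏ j : Fin ℓ, Real.sqrt ((1 + x j) / (1 - x j)) * Real.exp (2 * t * x j) := by
  classical
  have hM : (Matrix.of fun j k : Fin ℓ =>
      besselI ((j : ℤ) - (k : ℤ)) t + besselI ((j : ℤ) + (k : ℤ) + 1) t)
      = Cmat ℓ * Hmat ℓ t * (Cmat ℓ)ᵀ := by
    ext j k
    exact entry_eq ℓ t j k
  rw [hM, Matrix.det_mul, Matrix.det_mul, Matrix.det_transpose]
  -- determinant of the coefficient matrix
  have hC : (Cmat ℓ).det = (2:ℝ) ^ (ℓ * (ℓ - 1) / 2) := by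
    have htr : (Cmat ℓ).BlockTriangular (OrderDual.toDual) := by
      intro i j hij
      have hij' : i < j := hij
      exact Vp_coeff_zero_of_lt _ _ hij'
    rw [Matrix.det_of_lowerTriangular _ htr]
    have hdiag : ∀ j : Fin ℓ, Cmat ℓ j j = (2:ℝ)^(j:ℕ) := by
      intro j
      rw [Cmat, Matrix.of_apply, Vp_coeff_self]
    rw [Finset.prod_congr rfl fun j _ => hdiag j, Finset.prod_pow_eq_pow_sum]
    congr 1
    rw [Fin.sum_univ_eq_sum_range (fun i => i) ℓ, Finset.sum_range_id, Nat.mul_comm]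
  -- determinant of the Hankel matrix
  have hH : (Hmat ℓ t).det = (1/π)^ℓ *
      Matrix.det (Matrix.of fun a b : Fin ℓ => mom t ((a:ℕ) + (b:ℕ))) := by
    have : Hmat ℓ t = (1/π : ℝ) • Matrix.of (fun a b : Fin ℓ => mom t ((a:ℕ) + (b:ℕ))) := by
      ext a b
      rw [Hmat, Matrix.of_apply, Matrix.smul_apply, Matrix.of_apply, smul_eq_mul,
        mom_eq_trigmom]
    rw [this, Matrix.det_smul, Fintype.card_fin]
  have hmi := multint ℓ t
  simp only [wfun] at hmi
  rw [hmi, hC, hH]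
  have heven : 2 ∣ ℓ * (ℓ - 1) := by
    have h1 : ℓ - 1 + 1 = ℓ := Nat.succ_pred_eq_of_pos hℓ
    have h2 := Nat.even_mul_succ_self (ℓ - 1)
    rw [h1, Nat.mul_comm] at h2
    exact h2.two_dvd
  have hpow : (2:ℝ)^(ℓ*(ℓ-1)/2) * (2:ℝ)^(ℓ*(ℓ-1)/2) = 2^(ℓ*(ℓ-1)) := by
    rw [← pow_add]
    congr 1
    omega
  have hπ : (π:ℝ) ≠ 0 := Real.pi_ne_zero
  have hfac : ((ℓ.factorial : ℕ) : ℝ) ≠ 0 := Nat.cast_ne_zero.mpr ℓ.factorial_ne_zero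
  set D := Matrix.det (Matrix.of fun a b : Fin ℓ => mom t ((a:ℕ) + (b:ℕ)))
  calc (2:ℝ)^(ℓ*(ℓ-1)/2) * ((1/π)^ℓ * D) * (2:ℝ)^(ℓ*(ℓ-1)/2)
      = ((2:ℝ)^(ℓ*(ℓ-1)/2) * (2:ℝ)^(ℓ*(ℓ-1)/2)) * ((1/π)^ℓ * D) := by ring
    _ = (2:ℝ)^(ℓ*(ℓ-1)) * ((1/π)^ℓ * D) := by rw [hpow]
    _ = 2 ^ (ℓ * (ℓ - 1)) / (π ^ ℓ * (ℓ.factorial : ℝ)) * ((ℓ.factorial : ℝ) * D) := by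
        field_simp
        ring_nf
        rw [inv_pow, mul_inv_cancel₀ (pow_ne_zero ℓ hπ), one_mul]

end Main
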